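/- Let m : ℝ → ℝ be continuous and integrable, G(x) = (1/2)e^{-|x|}, and u = G * m. Then for every x ∈ ℝ: u(x) = (1/2)e^{-x}∫_{-∞}^x e^ξ m(ξ)dξ + (1/2)e^x∫_x^∞ e^{-ξ}m(ξ)dξ, u is differentiable, and u'(x) = -(1/2)e^{-x}∫_{-∞}^x e^ξ m(ξ)dξ + (1/2)e^x∫_x^∞ e^{-ξ}m(ξ)dξ; in particular |u'(x)| ≤ u(x) whenever m ≥ 0, and ‖u‖_{L^∞} ≤ (1/2)‖m‖_{L¹} and ‖u'‖_{L^∞} ≤ (1/2)‖m‖_{L¹} in general. -/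

import Mathlib

open MeasureTheory Real Set

/-- For continuous integrable `m` and `u = G * m` with `G(x) = (1/2)e^{-|x|}`:
the explicit kernel formula for `u`, differentiability of `u` with the explicit formula for
`u'`, the bound `|u'| ≤ u` when `m ≥ 0`, and the bounds `‖u‖_∞, ‖u'‖_∞ ≤ (1/2)‖m‖_{L¹}`. -/
theorem helmholtz_conv_properties (m : ℝ → ℝ) (hc : Continuous m)
    (hi : MeasureTheory.Integrable m) :
    let u : ℝ → ℝ := fun x => ∫ y : ℝ, (1/2) * Real.exp (-|x - y|) * m y
    let ux : ℝ → ℝ := fun x =>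
      -(1/2) * Real.exp (-x) * (∫ ξ in Set.Iic x, Real.exp ξ * m ξ)
        + (1/2) * Real.exp x * (∫ ξ in Set.Ici x, Real.exp (-ξ) * m ξ)
    (∀ x : ℝ, u x = (1/2) * Real.exp (-x) * (∫ ξ in Set.Iic x, Real.exp ξ * m ξ)
        + (1/2) * Real.exp x * (∫ ξ in Set.Ici x, Real.exp (-ξ) * m ξ))
    ∧ (∀ x : ℝ, HasDerivAt u (ux x) x)
    ∧ ((∀ y, 0 ≤ m y) → ∀ x : ℝ, |ux x| ≤ u x)
    ∧ (∀ x : ℝ, |u x| ≤ (1/2) * ∫ y : ℝ, |m y|)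
    ∧ (∀ x : ℝ, |ux x| ≤ (1/2) * ∫ y : ℝ, |m y|) := by
  intro u ux
  set f1 : ℝ → ℝ := fun ξ => Real.exp ξ * m ξ with hf1def
  set f2 : ℝ → ℝ := fun ξ => Real.exp (-ξ) * m ξ with hf2def
  have hf1c : Continuous f1 := Real.continuous_exp.mul hc
  have hf2c : Continuous f2 := (Real.continuous_exp.comp continuous_neg).mul hc
  -- integrability of f1 on Iic y
  have hA : ∀ y : ℝ, IntegrableOn f1 (Iic y) := by
    intro y
    refine Integrable.mono' ((hi.norm.const_mul (Real.exp y)).restrict)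
      hf1c.aestronglyMeasurable.restrict ?_
    refine (ae_restrict_iff' measurableSet_Iic).2 (ae_of_all _ fun t ht => ?_)
    have : Real.exp t ≤ Real.exp y := Real.exp_le_exp.2 ht
    have h0 := Real.exp_pos t
    simp only [f1, Real.norm_eq_abs, abs_mul, Real.abs_exp]
    nlinarith [abs_nonneg (m t)]
  -- integrability of f2 on Ici y
  have hB : ∀ y : ℝ, IntegrableOn f2 (Ici y) := by
    intro y
    refine Integrable.mono' ((hi.norm.const_mul (Real.exp (-y))).restrict)
      hf2c.aestronglyMeasurable.restrict ?_
    refine (ae_restrict_iff' measurableSet_Ici).2 (ae_of_all _ fun t ht => ?_)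
    have : Real.exp (-t) ≤ Real.exp (-y) := Real.exp_le_exp.2 (by linarith [mem_Ici.1 ht])
    have h0 := Real.exp_pos (-t)
    simp only [f2, Real.norm_eq_abs, abs_mul, Real.abs_exp]
    nlinarith [abs_nonneg (m t)]
  -- integrability of the convolution integrand
  have hconv : ∀ x : ℝ, Integrable (fun y => (1/2) * Real.exp (-|x - y|) * m y) := by
    intro x
    refine Integrable.mono' (hi.norm.const_mul (1/2))
      ((continuous_const.mul ((continuous_const.sub continuous_id).abs.neg.rexp)).mul
        hc).aestronglyMeasurable (ae_of_all _ fun y => ?_)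
    have h1 : Real.exp (-|x - y|) ≤ 1 := Real.exp_le_one_iff.2 (neg_nonpos.2 (abs_nonneg _))
    have h0 := Real.exp_pos (-|x - y|)
    simp only [Real.norm_eq_abs]
    rw [abs_mul, abs_mul, Real.abs_exp, show |(1:ℝ)/2| = 1/2 by norm_num]
    nlinarith [abs_nonneg (m y)]
  -- the explicit formula
  have hform : ∀ x : ℝ, u x = (1/2) * Real.exp (-x) * (∫ ξ in Iic x, f1 ξ)
      + (1/2) * Real.exp x * (∫ ξ in Ici x, f2 ξ) := by
    intro x
    have hsplit : (∫ y in Iio x, (1/2) * Real.exp (-|x - y|) * m y)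
        + (∫ y in Ici x, (1/2) * Real.exp (-|x - y|) * m y)
        = ∫ y : ℝ, (1/2) * Real.exp (-|x - y|) * m y :=
      intervalIntegral.integral_Iio_add_Ici ((hconv x).restrict) ((hconv x).restrict)
    have h1 : (∫ y in Iio x, (1/2) * Real.exp (-|x - y|) * m y)
        = (1/2) * Real.exp (-x) * (∫ ξ in Iic x, f1 ξ) := by
      rw [integral_Iic_eq_integral_Iio (f := f1)]
      rw [← integral_const_mul]
      refine setIntegral_congr_fun measurableSet_Iio fun y hy => ?_
      have : |x - y| = x - y := abs_of_nonneg (by linarith [mem_Iio.1 hy])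
      rw [this]
      simp only [hf1def]
      rw [show -(x - y) = -x + y by ring, Real.exp_add]
      ring
    have h2 : (∫ y in Ici x, (1/2) * Real.exp (-|x - y|) * m y)
        = (1/2) * Real.exp x * (∫ ξ in Ici x, f2 ξ) := by
      rw [← integral_const_mul]
      refine setIntegral_congr_fun measurableSet_Ici fun y hy => ?_
      have : |x - y| = y - x := by
        rw [abs_sub_comm]; exact abs_of_nonneg (by linarith [mem_Ici.1 hy])
      rw [this]
      simp only [hf2def]
      rw [show -(y - x) = x + -y by ring, Real.exp_add]
      ring
    rw [show u x = ∫ y : ℝ, (1/2) * Real.exp (-|x - y|) * m y from rfl, ← hsplit, h1, h2]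
  -- FTC for x ↦ ∫ in Iic x
  have key : ∀ (f : ℝ → ℝ), Continuous f → (∀ y : ℝ, IntegrableOn f (Iic y)) →
      ∀ x : ℝ, HasDerivAt (fun y => ∫ t in Iic y, f t) (f x) x := by
    intro f hf hint x
    have rep : (fun y => ∫ t in Iic y, f t)
        = fun y => (∫ t in Iic (0:ℝ), f t) + ∫ t in (0:ℝ)..y, f t := by
      funext y
      rw [← intervalIntegral.integral_Iic_sub_Iic (hint 0) (hint y)]
      ring
    rw [rep]
    exact (intervalIntegral.integral_hasDerivAt_right (hf.intervalIntegrable 0 x)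
      hf.stronglyMeasurable.stronglyMeasurableAtFilter hf.continuousAt).const_add _
  -- derivative of A
  have hA' : ∀ x : ℝ, HasDerivAt (fun y => ∫ t in Iic y, f1 t) (f1 x) x := key f1 hf1c hA
  -- derivative of B via reflection
  have hB' : ∀ x : ℝ, HasDerivAt (fun y => ∫ t in Ici y, f2 t) (-(f2 x)) x := by
    set g : ℝ → ℝ := fun t => f2 (-t) with hgdef
    have hgc : Continuous g := hf2c.comp continuous_neg
    have hgint : ∀ y : ℝ, IntegrableOn g (Iic y) := by
      intro y
      refine Integrable.mono' (((hi.comp_neg).norm.const_mul (Real.exp y)).restrict)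
        hgc.aestronglyMeasurable.restrict ?_
      refine (ae_restrict_iff' measurableSet_Iic).2 (ae_of_all _ fun t ht => ?_)
      have : Real.exp t ≤ Real.exp y := Real.exp_le_exp.2 ht
      have h0 := Real.exp_pos t
      simp only [g, f2, neg_neg, Real.norm_eq_abs, abs_mul, Real.abs_exp, Function.comp]
      nlinarith [abs_nonneg (m (-t))]
    have hrep : (fun y => ∫ t in Ici y, f2 t) = fun y => ∫ t in Iic (-y), g t := by
      funext y
      rw [hgdef]
      rw [integral_comp_neg_Iic (-y) f2, neg_neg, ← integral_Ici_eq_integral_Ioi]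
    rw [hrep]
    intro x
    have := (key g hgc hgint (-x)).comp x (hasDerivAt_neg x)
    simpa [g, neg_neg, mul_comm, Function.comp_def] using this
  -- the derivative of u
  have hderiv : ∀ x : ℝ, HasDerivAt u (ux x) x := by
    intro x
    have hu : u = fun x => (1/2) * Real.exp (-x) * (∫ ξ in Iic x, f1 ξ)
        + (1/2) * Real.exp x * (∫ ξ in Ici x, f2 ξ) := funext hform
    rw [hu]
    have he1 : HasDerivAt (fun x : ℝ => (1/2) * Real.exp (-x)) (-((1/2) * Real.exp (-x))) x := by
      have := ((Real.hasDerivAt_exp (-x)).comp x (hasDerivAt_neg x)).const_mul (1/2 : ℝ)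
      simpa [mul_comm] using this
    have he2 : HasDerivAt (fun x : ℝ => (1/2) * Real.exp x) ((1/2) * Real.exp x) x :=
      (Real.hasDerivAt_exp x).const_mul (1/2 : ℝ)
    have h := (he1.mul (hA' x)).add (he2.mul (hB' x))
    refine h.congr_deriv ?_
    have hx : Real.exp (-x) * Real.exp x = 1 := by
      rw [← Real.exp_add]; simp
    simp only [ux, f1, f2]
    nlinarith [hx]
  refine ⟨hform, hderiv, ?_, ?_, ?_⟩
  · -- |ux| ≤ u when m ≥ 0
    intro hm x
    set a := (1/2) * Real.exp (-x) * (∫ ξ in Iic x, f1 ξ) with hadef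
    set b := (1/2) * Real.exp x * (∫ ξ in Ici x, f2 ξ) with hbdef
    have hAnn : 0 ≤ ∫ ξ in Iic x, f1 ξ :=
      setIntegral_nonneg measurableSet_Iic fun ξ _ => mul_nonneg (Real.exp_pos ξ).le (hm ξ)
    have hBnn : 0 ≤ ∫ ξ in Ici x, f2 ξ :=
      setIntegral_nonneg measurableSet_Ici fun ξ _ => mul_nonneg (Real.exp_pos (-ξ)).le (hm ξ)
    have ha : 0 ≤ a := mul_nonneg (by positivity) hAnn
    have hb : 0 ≤ b := mul_nonneg (by positivity) hBnn
    have h1 : u x = a + b := hform x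
    have h2 : ux x = -a + b := by simp only [ux, hadef, hbdef, f1, f2]; ring
    rw [h1, h2, abs_le]
    constructor <;> linarith
  · -- |u| ≤ (1/2) ∫ |m|
    intro x
    have h1 : |u x| ≤ ∫ y : ℝ, ‖(1/2) * Real.exp (-|x - y|) * m y‖ := by
      rw [← Real.norm_eq_abs]
      exact norm_integral_le_integral_norm _
    have h2 : (∫ y : ℝ, ‖(1/2) * Real.exp (-|x - y|) * m y‖)
        ≤ ∫ y : ℝ, (1/2) * |m y| := by
      refine integral_mono (hconv x).norm (hi.norm.const_mul (1/2)) fun y => ?_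
      have hle : Real.exp (-|x - y|) ≤ 1 := Real.exp_le_one_iff.2 (neg_nonpos.2 (abs_nonneg _))
      have h0 := Real.exp_pos (-|x - y|)
      simp only [Real.norm_eq_abs]
      rw [abs_mul, abs_mul, Real.abs_exp, show |(1:ℝ)/2| = 1/2 by norm_num]
      nlinarith [abs_nonneg (m y)]
    calc |u x| ≤ ∫ y : ℝ, (1/2) * |m y| := h1.trans h2
      _ = (1/2) * ∫ y : ℝ, |m y| := integral_const_mul _ _
  · -- |ux| ≤ (1/2) ∫ |m|
    intro x
    have habs : Integrable (fun y => |m y|) := hi.abs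
    have hIic : IntegrableOn (fun y => |m y|) (Iic x) := habs.restrict
    have hIci : IntegrableOn (fun y => |m y|) (Ici x) := habs.restrict
    -- bound for the first term
    have hb1 : Real.exp (-x) * |∫ ξ in Iic x, f1 ξ| ≤ ∫ ξ in Iic x, |m ξ| := by
      have h1 : |∫ ξ in Iic x, f1 ξ| ≤ ∫ ξ in Iic x, ‖f1 ξ‖ := by
        rw [← Real.norm_eq_abs]; exact norm_integral_le_integral_norm _
      have h2 : Real.exp (-x) * (∫ ξ in Iic x, ‖f1 ξ‖)
          = ∫ ξ in Iic x, Real.exp (-x) * ‖f1 ξ‖ := (integral_const_mul _ _).symm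
      have h3 : (∫ ξ in Iic x, Real.exp (-x) * ‖f1 ξ‖) ≤ ∫ ξ in Iic x, |m ξ| := by
        refine setIntegral_mono_on ((hA x).norm.const_mul _) hIic measurableSet_Iic
          fun ξ hξ => ?_
        have hle : Real.exp (-x) * Real.exp ξ ≤ 1 := by
          rw [← Real.exp_add]
          exact Real.exp_le_one_iff.2 (by linarith [mem_Iic.1 hξ])
        have h0 : (0:ℝ) < Real.exp (-x) := Real.exp_pos _
        have h0' : (0:ℝ) < Real.exp ξ := Real.exp_pos _
        simp only [f1, Real.norm_eq_abs, abs_mul, Real.abs_exp]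
        nlinarith [abs_nonneg (m ξ)]
      calc Real.exp (-x) * |∫ ξ in Iic x, f1 ξ|
          ≤ Real.exp (-x) * (∫ ξ in Iic x, ‖f1 ξ‖) := by
            exact mul_le_mul_of_nonneg_left h1 (Real.exp_pos _).le
        _ = ∫ ξ in Iic x, Real.exp (-x) * ‖f1 ξ‖ := h2
        _ ≤ ∫ ξ in Iic x, |m ξ| := h3
    -- bound for the second term
    have hb2 : Real.exp x * |∫ ξ in Ici x, f2 ξ| ≤ ∫ ξ in Ici x, |m ξ| := by
      have h1 : |∫ ξ in Ici x, f2 ξ| ≤ ∫ ξ in Ici x, ‖f2 ξ‖ := by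
        rw [← Real.norm_eq_abs]; exact norm_integral_le_integral_norm _
      have h2 : Real.exp x * (∫ ξ in Ici x, ‖f2 ξ‖)
          = ∫ ξ in Ici x, Real.exp x * ‖f2 ξ‖ := (integral_const_mul _ _).symm
      have h3 : (∫ ξ in Ici x, Real.exp x * ‖f2 ξ‖) ≤ ∫ ξ in Ici x, |m ξ| := by
        refine setIntegral_mono_on ((hB x).norm.const_mul _) hIci measurableSet_Ici
          fun ξ hξ => ?_
        have hle : Real.exp x * Real.exp (-ξ) ≤ 1 := by
          rw [← Real.exp_add]
          exact Real.exp_le_one_iff.2 (by linarith [mem_Ici.1 hξ])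
        have h0 : (0:ℝ) < Real.exp x := Real.exp_pos _
        have h0' : (0:ℝ) < Real.exp (-ξ) := Real.exp_pos _
        simp only [f2, Real.norm_eq_abs, abs_mul, Real.abs_exp]
        nlinarith [abs_nonneg (m ξ)]
      calc Real.exp x * |∫ ξ in Ici x, f2 ξ|
          ≤ Real.exp x * (∫ ξ in Ici x, ‖f2 ξ‖) := by
            exact mul_le_mul_of_nonneg_left h1 (Real.exp_pos _).le
        _ = ∫ ξ in Ici x, Real.exp x * ‖f2 ξ‖ := h2
        _ ≤ ∫ ξ in Ici x, |m ξ| := h3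
    have hsum : (∫ ξ in Iic x, |m ξ|) + (∫ ξ in Ici x, |m ξ|) = ∫ y : ℝ, |m y| := by
      rw [integral_Iic_eq_integral_Iio]
      exact intervalIntegral.integral_Iio_add_Ici habs.restrict habs.restrict
    have htri : |ux x| ≤ (1/2) * (Real.exp (-x) * |∫ ξ in Iic x, f1 ξ|)
        + (1/2) * (Real.exp x * |∫ ξ in Ici x, f2 ξ|) := by
      simp only [ux, f1, f2]
      calc |(-(1/2) * Real.exp (-x) * (∫ ξ in Iic x, Real.exp ξ * m ξ)
            + (1/2) * Real.exp x * (∫ ξ in Ici x, Real.exp (-ξ) * m ξ))|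
          ≤ |(-(1/2)) * Real.exp (-x) * (∫ ξ in Iic x, Real.exp ξ * m ξ)|
            + |(1/2) * Real.exp x * (∫ ξ in Ici x, Real.exp (-ξ) * m ξ)| := abs_add_le _ _
        _ = (1/2) * (Real.exp (-x) * |∫ ξ in Iic x, Real.exp ξ * m ξ|)
            + (1/2) * (Real.exp x * |∫ ξ in Ici x, Real.exp (-ξ) * m ξ|) := by
            simp only [abs_mul, abs_neg, Real.abs_exp, show |(1:ℝ)/2| = 1/2 from by norm_num]
            ring
    calc |ux x| ≤ (1/2) * (Real.exp (-x) * |∫ ξ in Iic x, f1 ξ|)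
          + (1/2) * (Real.exp x * |∫ ξ in Ici x, f2 ξ|) := htri
      _ ≤ (1/2) * (∫ ξ in Iic x, |m ξ|) + (1/2) * (∫ ξ in Ici x, |m ξ|) := by
          have := hb1; have := hb2; nlinarith
      _ = (1/2) * ∫ y : ℝ, |m y| := by rw [← hsum]; ring
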